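/- Let μ₀ ∈ ℝ, σ₀ > 0, δ ∈ ℝ, v ∈ ℝ. On a probability space, let X be a random variable with law N(μ₀,σ₀²), and let (M, Σ) be a pair of real random variables with Σ > 0 almost surely and δσ₀² + (1 − δ)Σ² > 0 almost surely, such that (M, Σ) is independent of X. Define the random DAS-CUSUM increment s = −δ(X − M)²/(2Σ²) + δ(X − μ₀)²/(2σ₀²) + δ(σ₀² + (μ₀ − M)²)/(2Σ²) − δ/2 − δv, and define g(m, t) = (1/2)·log( t / (δσ₀² + (1 − δ)t) ) + δσ₀²/(2t) + ((μ₀ − m)²/2)·( δ/t − (1 − δ)δ/((1 − δ)t + δσ₀²) ) for t > 0 with δσ₀² + (1−δ)t > 0. Then, as an identity in [0, ∞] (both sides may be infinite), E[ exp(s) ] = exp( δ(−1/2 − v) ) · E[ exp( g(M, Σ²) ) ]. -/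

import Mathlib

open MeasureTheory

/-- The Gaussian probability density `f_{μ,σ²}(x) = (2πσ²)^{−1/2} exp(−(x−μ)²/(2σ²))`. -/
noncomputable def gaussPdf (μ σ x : ℝ) : ℝ :=
  (Real.sqrt (2 * Real.pi * σ ^ 2))⁻¹ * Real.exp (-(x - μ) ^ 2 / (2 * σ ^ 2))

/-- The Gaussian probability measure `N(μ,σ²)` on `ℝ`. -/
noncomputable def gaussMeasure (μ σ : ℝ) : Measure ℝ :=
  volume.withDensity (fun x => ENNReal.ofReal (gaussPdf μ σ x))

open Real ENNReal

/-- Integrability of a Gaussian-type function `exp(−a x² + b x + c)` for `a > 0`. -/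
lemma my_integrable_rexp_quadratic {a : ℝ} (ha : 0 < a) (b c : ℝ) :
    Integrable (fun x : ℝ => Real.exp (-a * x ^ 2 + b * x + c)) := by
  have h : (fun x : ℝ => Real.exp (-a * x ^ 2 + b * x + c))
      = fun x : ℝ => Real.exp (-a * (x + (-b) / (2 * a)) ^ 2) * Real.exp (c + b ^ 2 / (4 * a)) := by
    funext x
    rw [← Real.exp_add]
    congr 1
    field_simp
    ring
  rw [h]
  exact ((integrable_exp_neg_mul_sq ha).comp_add_right _).mul_const _

/-- The Gaussian integral with completed square: for `a > 0`,
`∫ exp(−a x² + b x + c) dx = √(π/a) · exp(c + b²/(4a))`. -/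
lemma my_integral_rexp_quadratic {a : ℝ} (ha : 0 < a) (b c : ℝ) :
    ∫ x : ℝ, Real.exp (-a * x ^ 2 + b * x + c)
      = Real.sqrt (π / a) * Real.exp (c + b ^ 2 / (4 * a)) := by
  have h : ∀ x : ℝ, Real.exp (-a * x ^ 2 + b * x + c)
      = Real.exp (-a * (x + (-b) / (2 * a)) ^ 2) * Real.exp (c + b ^ 2 / (4 * a)) := by
    intro x
    rw [← Real.exp_add]
    congr 1
    field_simp
    ring
  simp_rw [h]
  rw [integral_mul_const,
    integral_add_right_eq_self (fun x : ℝ => Real.exp (-a * x ^ 2)) ((-b) / (2 * a)),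
    integral_gaussian]

/-- The inner Gaussian integral: integrating out `x ∼ N(μ₀,σ₀²)` for fixed `(m, sig)`. -/
lemma inner_int (μ₀ σ₀ δ m sig : ℝ) (hσ₀ : 0 < σ₀) (hsig : 0 < sig)
    (hz : 0 < δ * σ₀ ^ 2 + (1 - δ) * sig ^ 2) :
    ∫⁻ x, ENNReal.ofReal (Real.exp (-(δ * (x - m) ^ 2) / (2 * sig ^ 2)
        + δ * (x - μ₀) ^ 2 / (2 * σ₀ ^ 2)
        + δ * (σ₀ ^ 2 + (μ₀ - m) ^ 2) / (2 * sig ^ 2))) ∂(gaussMeasure μ₀ σ₀)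
    = ENNReal.ofReal (Real.exp ((1 / 2) * Real.log (sig ^ 2 / (δ * σ₀ ^ 2 + (1 - δ) * sig ^ 2))
        + δ * σ₀ ^ 2 / (2 * sig ^ 2)
        + (μ₀ - m) ^ 2 / 2
          * (δ / sig ^ 2 - (1 - δ) * δ / ((1 - δ) * sig ^ 2 + δ * σ₀ ^ 2)))) := by
  set t : ℝ := sig ^ 2 with htdef
  have ht : 0 < t := by positivity
  set z : ℝ := δ * σ₀ ^ 2 + (1 - δ) * t with hzdef
  have hz' : 0 < z := hz
  have hσ2 : (0:ℝ) < σ₀ ^ 2 := by positivity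
  set a : ℝ := z / (2 * t * σ₀ ^ 2) with hadef
  have ha : 0 < a := by positivity
  set b : ℝ := (1 - δ) * μ₀ / σ₀ ^ 2 + δ * m / t with hbdef
  set c : ℝ := -((1 - δ) * μ₀ ^ 2) / (2 * σ₀ ^ 2) - δ * m ^ 2 / (2 * t)
      + δ * (σ₀ ^ 2 + (μ₀ - m) ^ 2) / (2 * t) with hcdef
  have hcomb : ∀ x : ℝ, gaussPdf μ₀ σ₀ x
        * Real.exp (-(δ * (x - m) ^ 2) / (2 * t)
            + δ * (x - μ₀) ^ 2 / (2 * σ₀ ^ 2) + δ * (σ₀ ^ 2 + (μ₀ - m) ^ 2) / (2 * t))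
      = (Real.sqrt (2 * π * σ₀ ^ 2))⁻¹ * Real.exp (-a * x ^ 2 + b * x + c) := by
    intro x
    unfold gaussPdf
    rw [mul_assoc, ← Real.exp_add]
    congr 2
    rw [hadef, hbdef, hcdef, hzdef]
    field_simp
    ring
  have hpdf_nn : ∀ x : ℝ, 0 ≤ gaussPdf μ₀ σ₀ x := by
    intro x
    unfold gaussPdf
    positivity
  have hmeas_pdf : Measurable fun x => ENNReal.ofReal (gaussPdf μ₀ σ₀ x) := by
    apply Measurable.ennreal_ofReal
    unfold gaussPdf
    fun_prop
  have hmeas_f : Measurable fun x : ℝ => ENNReal.ofReal (Real.exp (-(δ * (x - m) ^ 2) / (2 * t)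
      + δ * (x - μ₀) ^ 2 / (2 * σ₀ ^ 2) + δ * (σ₀ ^ 2 + (μ₀ - m) ^ 2) / (2 * t))) := by
    apply Measurable.ennreal_ofReal
    fun_prop
  rw [gaussMeasure, lintegral_withDensity_eq_lintegral_mul _ hmeas_pdf hmeas_f]
  have step1 : ∀ x : ℝ, (ENNReal.ofReal (gaussPdf μ₀ σ₀ x))
        * ENNReal.ofReal (Real.exp (-(δ * (x - m) ^ 2) / (2 * t)
            + δ * (x - μ₀) ^ 2 / (2 * σ₀ ^ 2) + δ * (σ₀ ^ 2 + (μ₀ - m) ^ 2) / (2 * t)))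
      = ENNReal.ofReal ((Real.sqrt (2 * π * σ₀ ^ 2))⁻¹ * Real.exp (-a * x ^ 2 + b * x + c)) := by
    intro x
    rw [← ENNReal.ofReal_mul (hpdf_nn x), hcomb x]
  simp only [Pi.mul_apply]
  rw [lintegral_congr fun x => step1 x]
  rw [← ofReal_integral_eq_lintegral_ofReal
    (((my_integrable_rexp_quadratic ha b c).const_mul _))
    (Filter.Eventually.of_forall fun x => by positivity)]
  rw [integral_const_mul, my_integral_rexp_quadratic ha b c]
  congr 1
  have hK : (Real.sqrt (2 * π * σ₀ ^ 2))⁻¹ * Real.sqrt (π / a) = Real.sqrt (t / z) := by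
    rw [inv_mul_eq_div, ← Real.sqrt_div (by positivity)]
    congr 1
    rw [hadef]
    field_simp
  have hsqrt : Real.sqrt (t / z) = Real.exp ((1 / 2) * Real.log (t / z)) := by
    rw [Real.sqrt_eq_rpow, Real.rpow_def_of_pos (by positivity)]
    ring_nf
  have hexp : c + b ^ 2 / (4 * a) = δ * σ₀ ^ 2 / (2 * t)
      + (μ₀ - m) ^ 2 / 2 * (δ / t - (1 - δ) * δ / ((1 - δ) * t + δ * σ₀ ^ 2)) := by
    rw [hcdef, hbdef, hadef, hzdef]
    have h1 : (1 - δ) * t + δ * σ₀ ^ 2 ≠ 0 := by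
      rw [hzdef] at hz'; nlinarith
    rw [show δ * σ₀ ^ 2 + (1 - δ) * t = (1 - δ) * t + δ * σ₀ ^ 2 by ring]
    field_simp
    ring
  rw [← mul_assoc, hK, hsqrt, hexp, ← Real.exp_add]
  congr 1
  rw [hzdef]
  ring

/-- for `X ∼ N(μ₀,σ₀²)` independent of `(M, Sig)` with `Sig > 0` a.s. and
`δσ₀² + (1−δ)Sig² > 0` a.s., the tilted DAS-CUSUM increment satisfies, in `[0,∞]`,
`E[exp(s)] = exp(δ(−1/2 − v)) · E[exp(g(M, Sig²))]`. -/
theorem stmt_6 {Ω : Type*} [MeasurableSpace Ω] (P : Measure Ω) [IsProbabilityMeasure P]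
    (μ₀ σ₀ δ v : ℝ) (hσ₀ : 0 < σ₀)
    (X M Sig : Ω → ℝ)
    (hX : Measurable X) (hM : Measurable M) (hSig : Measurable Sig)
    (hlaw : Measure.map X P = gaussMeasure μ₀ σ₀)
    (hSigpos : ∀ᵐ ω ∂P, 0 < Sig ω)
    (hzpos : ∀ᵐ ω ∂P, 0 < δ * σ₀ ^ 2 + (1 - δ) * Sig ω ^ 2)
    (hindep : ProbabilityTheory.IndepFun (fun ω => (M ω, Sig ω)) X P) :
    ∫⁻ ω, ENNReal.ofReal (Real.exp
        (-(δ * (X ω - M ω) ^ 2) / (2 * Sig ω ^ 2)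
          + δ * (X ω - μ₀) ^ 2 / (2 * σ₀ ^ 2)
          + δ * (σ₀ ^ 2 + (μ₀ - M ω) ^ 2) / (2 * Sig ω ^ 2)
          - δ / 2 - δ * v)) ∂P
      = ENNReal.ofReal (Real.exp (δ * (-1 / 2 - v)))
        * ∫⁻ ω, ENNReal.ofReal (Real.exp
            ((1 / 2) * Real.log (Sig ω ^ 2 / (δ * σ₀ ^ 2 + (1 - δ) * Sig ω ^ 2))
              + δ * σ₀ ^ 2 / (2 * Sig ω ^ 2)
              + (μ₀ - M ω) ^ 2 / 2
                * (δ / Sig ω ^ 2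
                    - (1 - δ) * δ / ((1 - δ) * Sig ω ^ 2 + δ * σ₀ ^ 2)))) ∂P := by
  classical
  have hMS : Measurable fun ω => (M ω, Sig ω) := hM.prodMk hSig
  set F : (ℝ × ℝ) × ℝ → ℝ≥0∞ := fun p =>
    ENNReal.ofReal (Real.exp (-(δ * (p.2 - p.1.1) ^ 2) / (2 * p.1.2 ^ 2)
      + δ * (p.2 - μ₀) ^ 2 / (2 * σ₀ ^ 2)
      + δ * (σ₀ ^ 2 + (μ₀ - p.1.1) ^ 2) / (2 * p.1.2 ^ 2))) with hFdef
  set G : ℝ × ℝ → ℝ≥0∞ := fun q =>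
    ENNReal.ofReal (Real.exp ((1 / 2) * Real.log (q.2 ^ 2 / (δ * σ₀ ^ 2 + (1 - δ) * q.2 ^ 2))
      + δ * σ₀ ^ 2 / (2 * q.2 ^ 2)
      + (μ₀ - q.1) ^ 2 / 2
        * (δ / q.2 ^ 2 - (1 - δ) * δ / ((1 - δ) * q.2 ^ 2 + δ * σ₀ ^ 2)))) with hGdef
  have hF : Measurable F := by
    apply Measurable.ennreal_ofReal; fun_prop
  have hG : Measurable G := by
    apply Measurable.ennreal_ofReal
    apply Measurable.exp
    apply Measurable.add
    · apply Measurable.add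
      · exact measurable_const.mul (Measurable.log (by fun_prop))
      · fun_prop
    · fun_prop
  have hsplit : ∀ ω, ENNReal.ofReal (Real.exp
        (-(δ * (X ω - M ω) ^ 2) / (2 * Sig ω ^ 2)
          + δ * (X ω - μ₀) ^ 2 / (2 * σ₀ ^ 2)
          + δ * (σ₀ ^ 2 + (μ₀ - M ω) ^ 2) / (2 * Sig ω ^ 2)
          - δ / 2 - δ * v))
      = ENNReal.ofReal (Real.exp (δ * (-1 / 2 - v))) * F ((M ω, Sig ω), X ω) := by
    intro ω
    rw [hFdef, ← ENNReal.ofReal_mul (Real.exp_nonneg _), ← Real.exp_add]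
    congr 2
    ring
  simp_rw [hsplit]
  rw [lintegral_const_mul' _ _ ENNReal.ofReal_ne_top]
  congr 1
  have hprod : Measure.map (fun ω => ((M ω, Sig ω), X ω)) P
      = (Measure.map (fun ω => (M ω, Sig ω)) P).prod (Measure.map X P) :=
    (ProbabilityTheory.indepFun_iff_map_prod_eq_prod_map_map hMS.aemeasurable
      hX.aemeasurable).mp hindep
  have hGP : IsProbabilityMeasure (gaussMeasure μ₀ σ₀) :=
    hlaw ▸ Measure.isProbabilityMeasure_map hX.aemeasurable
  have key : ∫⁻ ω, F ((M ω, Sig ω), X ω) ∂P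
      = ∫⁻ q, ∫⁻ x, F (q, x) ∂(gaussMeasure μ₀ σ₀)
          ∂(Measure.map (fun ω => (M ω, Sig ω)) P) := by
    rw [← lintegral_map hF (hMS.prodMk hX), hprod, hlaw,
      lintegral_prod _ hF.aemeasurable]
  rw [key]
  have h1 : ∀ᵐ q ∂(Measure.map (fun ω => (M ω, Sig ω)) P), 0 < q.2 := by
    rw [ae_map_iff hMS.aemeasurable (measurableSet_lt measurable_const measurable_snd)]
    exact hSigpos
  have h2 : ∀ᵐ q ∂(Measure.map (fun ω => (M ω, Sig ω)) P),
      0 < δ * σ₀ ^ 2 + (1 - δ) * q.2 ^ 2 := by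
    rw [ae_map_iff hMS.aemeasurable (measurableSet_lt measurable_const (by fun_prop))]
    exact hzpos
  have hinner : ∫⁻ q, ∫⁻ x, F (q, x) ∂(gaussMeasure μ₀ σ₀)
          ∂(Measure.map (fun ω => (M ω, Sig ω)) P)
      = ∫⁻ q, G q ∂(Measure.map (fun ω => (M ω, Sig ω)) P) := by
    refine lintegral_congr_ae ?_
    filter_upwards [h1, h2] with q hq1 hq2
    exact inner_int μ₀ σ₀ δ q.1 q.2 hσ₀ hq1 hq2
  rw [hinner, lintegral_map hG hMS]
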